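/- arXiv:2109.15243 — 6 statements merged into one kernel-verified Lean document; each statement's English description precedes it below -/
import Mathlib

section
/- For every positive integer n, h_{2n+1} = t_{2n+1} · h_{2n-2}. -/
def t (n : ℕ) : ℤ := (-1) ^ ((Nat.digits 2 n).sum)

def h : ℕ → ℤ
  | 0 => 0
  | 1 => 1
  | (n + 2) => t (n + 2) * h (n + 1) + h n

lemma t_mul (m : ℕ) (hm : 0 < m) : t (2 * m) * t (2 * m + 1) = -1 := by
  have h1 : Nat.digits 2 (2 * m) = 0 :: Nat.digits 2 m := by
    rw [Nat.digits_def' (by norm_num) (by omega)]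
    congr 1
    · omega
    · congr 1; omega
  have h2 : Nat.digits 2 (2 * m + 1) = 1 :: Nat.digits 2 m := by
    rw [Nat.digits_def' (by norm_num) (by omega)]
    congr 1
    · omega
    · congr 1; omega
  unfold t
  rw [h1, h2, List.sum_cons, List.sum_cons, pow_add, pow_add]
  simp [pow_mul, mul_comm]
  ring_nf
  simp [pow_mul]
  rcases Nat.even_or_odd (Nat.digits 2 m).sum with he | ho
  · exact Or.inl (Even.neg_one_pow he)
  · exact Or.inr (Odd.neg_one_pow ho)

theorem stmt0 : ∀ n : ℕ, 0 < n → h (2 * n + 1) = t (2 * n + 1) * h (2 * n - 2) := by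
  intro n hn
  cases n with
  | zero => omega
  | succ k =>
  have e1 : 2 * (k + 1) + 1 = (2 * k + 1) + 2 := by ring
  have e2 : 2 * (k + 1) = 2 * k + 2 := by ring
  have e3 : 2 * (k + 1) - 2 = 2 * k := by omega
  rw [e1, e3, show (2*k+1)+2 = (2*k)+1+2 by ring]
  have hh1 : h (2*k+1+2) = t (2*k+1+2) * h (2*k+2) + h (2*k+1) := rfl
  have hh2 : h (2*k+2) = t (2*k+2) * h (2*k+1) + h (2*k) := rfl
  have ht : t (2 * (k+1)) * t (2 * (k+1) + 1) = -1 := t_mul (k+1) (by omega)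
  rw [show 2*(k+1) = 2*k+2 by ring] at ht
  rw [show 2*k+2+1 = 2*k+1+2 by ring] at ht
  rw [hh1, hh2]
  linear_combination h (2*k+1) * ht
end

section
/- For every positive integer n such that t_n ≠ t_{n-1}, we have h_{4n} = t_n · h_{4n-3}. -/
lemma h_rec (m : ℕ) : h (m + 2) = t (m + 2) * h (m + 1) + h m := rfl

lemma t_even (m : ℕ) : t (2 * m) = t m := by
  rcases Nat.eq_zero_or_pos m with rfl | hm
  · rfl
  · unfold t
    rw [Nat.digits_def' (by norm_num : 1 < 2) (by omega)]
    simp [Nat.mul_div_cancel_left, Nat.mul_mod_right]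

lemma t_odd (m : ℕ) : t (2 * m + 1) = -t m := by
  unfold t
  rw [Nat.digits_def' (by norm_num : 1 < 2) (by omega)]
  have h1 : (2 * m + 1) % 2 = 1 := by omega
  have h2 : (2 * m + 1) / 2 = m := by omega
  rw [h1, h2]
  simp [pow_succ, pow_add]

lemma t_pm (m : ℕ) : t m = 1 ∨ t m = -1 := neg_one_pow_eq_or ℤ _

theorem stmt1 : ∀ n : ℕ, 0 < n → t n ≠ t (n - 1) → h (4 * n) = t n * h (4 * n - 3) := by
  rintro n hn hne
  obtain ⟨k, rfl⟩ : ∃ k, n = k + 1 := ⟨n - 1, by omega⟩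
  simp only [Nat.add_sub_cancel] at hne
  have hneg : t (k + 1) = -t k := by
    rcases t_pm (k + 1) with h1 | h1 <;> rcases t_pm k with h2 | h2 <;> omega
  have e4 : 4 * (k + 1) = (4 * k + 2) + 2 := by ring
  have e3 : 4 * (k + 1) - 3 = 4 * k + 1 := by omega
  have e44 : (4 * k + 2) + 2 = 2 * (2 * (k + 1)) := by ring
  have e43 : (4 * k + 2) + 1 = 2 * (2 * k + 1) + 1 := by ring
  have ht4 : t ((4 * k + 2) + 2) = t (k + 1) := by rw [e44, t_even, t_even]
  have ht3 : t ((4 * k + 2) + 1) = t k := by rw [e43, t_odd, t_odd]; ring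
  have hsq : t (k + 1) * t (k + 1) = 1 := by
    rcases t_pm (k + 1) with h1 | h1 <;> rw [h1] <;> norm_num
  rw [e4, e3, h_rec, show (4 * k + 2) + 1 = (4 * k + 1) + 2 by ring] at *
  rw [h_rec, show (4 * k + 1) + 1 = 4 * k + 2 by ring] at *
  rw [ht4, ht3, show t k = -t (k + 1) by linarith]
  linear_combination (-(h (4 * k + 2))) * hsq
end

section
/- For every integer n ≥ 2, sign(h_{2n+1}) = t_n; in particular, combined with h_0 = h_3 = 0 and h_{2n} < 0 for n ≥ 1, the sequence (sign(h_n)) satisfies: sign(h_0) = sign(h_3) = 0, sign(h_{2n}) = -1 for n ≥ 1, and sign(h_{2n+1}) = t_n for n ≥ 2. -/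
lemma t_cases (n : ℕ) : t n = 1 ∨ t n = -1 := by
  unfold t
  rcases Nat.even_or_odd ((Nat.digits 2 n).sum) with he | ho
  · left; exact he.neg_one_pow
  · right; exact ho.neg_one_pow

lemma t_sq (n : ℕ) : t n * t n = 1 := by
  rcases t_cases n with hh | hh <;> rw [hh] <;> ring

lemma t_two_mul (n : ℕ) : t (2 * n) = t n := by
  rcases Nat.eq_zero_or_pos n with rfl | hn
  · rfl
  · unfold t
    rw [Nat.digits_def' (by norm_num : 1 < 2) (by omega : 0 < 2 * n)]
    have h1 : (2 * n) % 2 = 0 := by omega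
    have h2 : (2 * n) / 2 = n := by omega
    rw [h1, h2]
    simp

lemma t_two_mul_add_one (n : ℕ) : t (2 * n + 1) = -t n := by
  unfold t
  rw [Nat.digits_def' (by norm_num : 1 < 2) (by omega : 0 < 2 * n + 1)]
  have h1 : (2 * n + 1) % 2 = 1 := by omega
  have h2 : (2 * n + 1) / 2 = n := by omega
  rw [h1, h2]
  simp only [List.sum_cons, pow_add, pow_one]
  ring

lemma h_add_two (n : ℕ) : h (n + 2) = t (n + 2) * h (n + 1) + h n := rfl

/-- key identity: h(2n+3) = -t(n+1) * h(2n) -/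
lemma h_key (n : ℕ) : h (2 * n + 3) = -t (n + 1) * h (2 * n) := by
  have e1 : h (2 * n + 3) = t (2 * n + 1 + 2) * h (2 * n + 2) + h (2 * n + 1) := by
    rw [show 2 * n + 3 = (2 * n + 1) + 2 by ring]; exact h_add_two _
  have e2 : h (2 * n + 2) = t (2 * n + 2) * h (2 * n + 1) + h (2 * n) := h_add_two _
  have t1 : t (2 * n + 1 + 2) = -t (n + 1) := by
    rw [show 2 * n + 1 + 2 = 2 * (n + 1) + 1 by ring, t_two_mul_add_one]
  have t2 : t (2 * n + 2) = t (n + 1) := by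
    rw [show 2 * n + 2 = 2 * (n + 1) by ring, t_two_mul]
  rw [e1, e2, t1, t2]
  linear_combination (-h (2 * n + 1)) * t_sq (n + 1)

lemma t_consec (n : ℕ) (hne : t (n + 2) * t (n + 1) = 1) : t (n + 1) * t n = -1 := by
  rcases Nat.even_or_odd n with ⟨j, hj⟩ | ⟨j, hj⟩
  · have h1 : t (n + 1) = -t j := by
      rw [show n + 1 = 2 * j + 1 by omega, t_two_mul_add_one]
    have h2 : t n = t j := by rw [show n = 2 * j by omega, t_two_mul]
    rw [h1, h2]
    linear_combination -t_sq j
  · exfalso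
    have h1 : t (n + 2) = -t (j + 1) := by
      rw [show n + 2 = 2 * (j + 1) + 1 by omega, t_two_mul_add_one]
    have h2 : t (n + 1) = t (j + 1) := by
      rw [show n + 1 = 2 * (j + 1) by omega, t_two_mul]
    rw [h1, h2] at hne
    nlinarith [t_sq (j + 1)]

lemma h_window (m : ℕ) :
    h (2 * (m + 1)) < 0 ∧ h (2 * (m + 2)) < 0 ∧ h (2 * (m + 3)) < 0 := by
  induction m with
  | zero => refine ⟨?_, ?_, ?_⟩ <;> norm_num [h, t]
  | succ m ih =>
    obtain ⟨h1, h2, h3⟩ := ih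
    refine ⟨h2, h3, ?_⟩
    have e1 : h (2 * (m + 1 + 3)) = t (m + 4) * h (2 * (m + 2) + 3) + h (2 * (m + 3)) := by
      rw [show 2 * (m + 1 + 3) = (2 * (m + 3)) + 2 by ring, h_add_two,
        show 2 * (m + 3) + 2 = 2 * (m + 4) by ring, t_two_mul,
        show 2 * (m + 3) + 1 = 2 * (m + 2) + 3 by ring]
    rw [h_key] at e1
    have hp : t (m + 4) * t (m + 3) = 1 ∨ t (m + 4) * t (m + 3) = -1 := by
      rcases t_cases (m + 4) with a | a <;> rcases t_cases (m + 3) with b | b <;>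
        rw [a, b] <;> norm_num
    rcases hp with hp | hp
    · have hq : t (m + 3) * t (m + 2) = -1 := t_consec (m + 2) hp
      have e2 : h (2 * (m + 3)) = t (m + 3) * h (2 * (m + 1) + 3) + h (2 * (m + 2)) := by
        rw [show 2 * (m + 3) = (2 * (m + 2)) + 2 by ring, h_add_two,
          show 2 * (m + 2) + 2 = 2 * (m + 3) by ring, t_two_mul,
          show 2 * (m + 2) + 1 = 2 * (m + 1) + 3 by ring]
      rw [h_key] at e2
      have key : h (2 * (m + 1 + 3)) = h (2 * (m + 1)) := by
        rw [e1, e2]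
        linear_combination (-h (2 * (m + 2))) * hp + (-h (2 * (m + 1))) * hq
      rw [key]; exact h1
    · have key : h (2 * (m + 1 + 3)) = h (2 * (m + 2)) + h (2 * (m + 3)) := by
        rw [e1]
        linear_combination (-h (2 * (m + 2))) * hp
      rw [key]; linarith

lemma h_even_neg (n : ℕ) (hn : 1 ≤ n) : h (2 * n) < 0 := by
  obtain ⟨m, rfl⟩ : ∃ m, n = m + 1 := ⟨n - 1, by omega⟩
  exact (h_window m).1

theorem stmt3 :
    (∀ n : ℕ, 2 ≤ n → Int.sign (h (2 * n + 1)) = t n) ∧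
    Int.sign (h 0) = 0 ∧ Int.sign (h 3) = 0 ∧
    (∀ n : ℕ, 1 ≤ n → Int.sign (h (2 * n)) = -1) := by
  refine ⟨?_, ?_, ?_, ?_⟩
  · intro n hn
    obtain ⟨m, rfl⟩ : ∃ m, n = m + 2 := ⟨n - 2, by omega⟩
    have e : h (2 * (m + 2) + 1) = -t (m + 2) * h (2 * (m + 1)) := by
      rw [show 2 * (m + 2) + 1 = 2 * (m + 1) + 3 by ring, h_key]
    have hneg : h (2 * (m + 1)) < 0 := h_even_neg (m + 1) (by omega)
    rcases t_cases (m + 2) with ht | ht <;> rw [e, ht]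
    · rw [Int.sign_eq_one_iff_pos.mpr (by linarith)]
    · rw [Int.sign_eq_neg_one_iff_neg.mpr (by linarith)]
  · rfl
  · have : h 3 = 0 := by norm_num [h, t]
    rw [this]; rfl
  · intro n hn
    exact Int.sign_eq_neg_one_iff_neg.mpr (h_even_neg n hn)
end

section
/- For every n ∈ ℕ, h_n is even if and only if 3 divides n. -/
lemma t_not_even (n : ℕ) : ¬ Even (t n) := by
  rcases neg_one_pow_eq_or ℤ ((Nat.digits 2 n).sum) with h | h <;>
    simp [t, h] <;> decide

lemma key : ∀ n : ℕ, (Even (h n) ↔ 3 ∣ n) ∧ (Even (h (n + 1)) ↔ 3 ∣ (n + 1)) := by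
  intro n
  induction n with
  | zero => constructor <;> simp [h] <;> decide
  | succ k ih =>
    refine ⟨ih.2, ?_⟩
    have h2 : h (k + 2) = t (k + 2) * h (k + 1) + h k := rfl
    rw [h2, Int.even_add, Int.even_mul]
    have := t_not_even (k + 2)
    constructor
    · intro hh
      have : (3 ∣ k + 1 ↔ 3 ∣ k) := by
        rw [← ih.1, ← ih.2]; tauto
      omega
    · intro hh
      have h1 : ¬ 3 ∣ k + 1 := by omega
      have h0 : ¬ 3 ∣ k := by omega
      rw [← ih.1] at h0; rw [← ih.2] at h1; tauto

theorem stmt13 : ∀ n : ℕ, Even (h n) ↔ 3 ∣ n := fun n => (key n).1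
end

section
/- For each integer m ≥ 2, there are infinitely many positive integers n such that m divides h_n. -/
namespace Stmt15Aux

abbrev Mat := Matrix (Fin 2) (Fin 2) ℤ

def Dm : Mat := !![1, 0; 0, -1]

def Mt (j : ℕ) : Mat := !![0, 1; 1, t j]

def Fm : ℕ → Mat
  | 0 => 1
  | (n + 1) => Mt (n + 1) * Fm n

lemma Fm_succ (n : ℕ) : Fm (n + 1) = Mt (n + 1) * Fm n := rfl

lemma Dm_mul_Dm : Dm * Dm = 1 := by
  ext i j
  fin_cases i <;> fin_cases j <;>
    simp [Dm, Matrix.mul_apply, Fin.sum_univ_two, Matrix.one_apply]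

lemma DD_cancel (X : Mat) : Dm * (Dm * X) = X := by
  rw [← mul_assoc, Dm_mul_Dm, one_mul]

lemma sum_digits_pow_add :
    ∀ k : ℕ, 1 ≤ k → ∀ i : ℕ, i < 2 ^ k →
      (Nat.digits 2 (2 ^ k + i)).sum = (Nat.digits 2 i).sum + 1 := by
  intro k
  induction k with
  | zero => intro hk; exact absurd hk (by omega)
  | succ k ih =>
    intro _ i hi
    rcases Nat.eq_zero_or_pos k with hk | hk
    · subst hk
      have d0 : Nat.digits 2 0 = [] := Nat.digits_zero 2
      have d1 : Nat.digits 2 1 = [1] := by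
        rw [Nat.digits_def' (by norm_num : (1:ℕ) < 2) one_pos]; simp
      have d2 : Nat.digits 2 2 = [0, 1] := by
        rw [Nat.digits_def' (by norm_num : (1:ℕ) < 2) (by norm_num)]
        norm_num [d1]
      have d3 : Nat.digits 2 3 = [1, 1] := by
        rw [Nat.digits_def' (by norm_num : (1:ℕ) < 2) (by norm_num)]
        norm_num [d1]
      interval_cases i
      · show (Nat.digits 2 (2^1 + 0)).sum = (Nat.digits 2 0).sum + 1
        norm_num [d2, d0]
      · show (Nat.digits 2 (2^1 + 1)).sum = (Nat.digits 2 1).sum + 1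
        norm_num [d3, d1]
    · have hq : i / 2 < 2 ^ k := by
        have h2 : (2:ℕ) ^ (k+1) = 2 * 2 ^ k := by ring
        omega
      have hN : (2:ℕ) ^ (k+1) + i = 2 * (2 ^ k + i / 2) + i % 2 := by
        have h2 : (2:ℕ) ^ (k+1) = 2 * 2 ^ k := by ring
        omega
      have hNpos : 0 < 2 ^ (k+1) + i := by positivity
      rw [Nat.digits_def' (by norm_num : (1:ℕ) < 2) hNpos]
      have hmod : (2 ^ (k+1) + i) % 2 = i % 2 := by omega
      have hdiv : (2 ^ (k+1) + i) / 2 = 2 ^ k + i / 2 := by omega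
      rw [hmod, hdiv, List.sum_cons, ih hk (i / 2) hq]
      rcases Nat.eq_zero_or_pos i with hi0 | hi0
      · subst hi0; simp
      · rw [Nat.digits_def' (by norm_num : (1:ℕ) < 2) hi0, List.sum_cons]
        omega

lemma t_fold (k i : ℕ) (hk : 1 ≤ k) (hi : i < 2 ^ k) :
    t (2 ^ k + i) = - t i := by
  unfold t
  rw [sum_digits_pow_add k hk i hi, pow_succ]
  ring

lemma Mt_fold (k i : ℕ) (hk : 1 ≤ k) (hi : i < 2 ^ k) :
    Mt (2 ^ k + i) = -(Dm * Mt i * Dm) := by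
  unfold Mt
  rw [t_fold k i hk hi]
  ext a b
  fin_cases a <;> fin_cases b <;>
    simp [Dm, Matrix.mul_apply, Fin.sum_univ_two]

lemma window (k : ℕ) (hk : 1 ≤ k) :
    ∀ r : ℕ, r < 2 ^ k →
      Fm (2 ^ k + r) = ((-1 : ℤ) ^ r) • (Dm * Fm r * Dm * Fm (2 ^ k)) := by
  intro r
  induction r with
  | zero =>
    intro _
    show Fm (2 ^ k + 0) = ((-1 : ℤ) ^ 0) • (Dm * Fm 0 * Dm * Fm (2 ^ k))
    rw [pow_zero, one_smul]
    show Fm (2 ^ k + 0) = Dm * (1 : Mat) * Dm * Fm (2 ^ k)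
    rw [mul_one, Dm_mul_Dm, one_mul, Nat.add_zero]
  | succ r ih =>
    intro hr1
    have hr : r < 2 ^ k := Nat.lt_of_succ_lt hr1
    have e1 : 2 ^ k + (r + 1) = (2 ^ k + r) + 1 := by omega
    rw [e1, Fm_succ, ih hr]
    have e2 : (2 ^ k + r) + 1 = 2 ^ k + (r + 1) := by omega
    rw [e2, Mt_fold k (r+1) hk hr1]
    have lhs_eq :
        -(Dm * Mt (r+1) * Dm) * (((-1 : ℤ) ^ r) • (Dm * Fm r * Dm * Fm (2 ^ k)))
          = ((-1 : ℤ) ^ (r+1)) •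
            ((Dm * Mt (r+1) * Dm) * (Dm * Fm r * Dm * Fm (2 ^ k))) := by
      rw [neg_mul, mul_smul_comm, ← neg_smul, pow_succ]
      ring_nf
    rw [lhs_eq, Fm_succ]
    congr 1
    simp only [mul_assoc, DD_cancel]

lemma det_Fm : ∀ n : ℕ, (Fm n).det = (-1 : ℤ) ^ n := by
  intro n
  induction n with
  | zero => simp [Fm]
  | succ n ih =>
    rw [Fm_succ, Matrix.det_mul, ih]
    have : (Mt (n+1)).det = -1 := by
      unfold Mt
      rw [Matrix.det_fin_two_of]
      have : t (n+1) * t (n+1) ≥ 0 := mul_self_nonneg _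
      simp
    rw [this, pow_succ]
    ring

lemma Fm_entry : ∀ n : ℕ, Fm (n+1) 0 0 = h n ∧ Fm (n+1) 1 0 = h (n+1) := by
  intro n
  induction n with
  | zero =>
    constructor <;>
      simp [Fm, Mt, h, Matrix.mul_apply, Fin.sum_univ_two]
  | succ n ih =>
    have e : Fm (n+2) = Mt (n+2) * Fm (n+1) := rfl
    constructor
    · rw [e]
      simp [Mt, Matrix.mul_apply, Fin.sum_univ_two]
      exact ih.2
    · rw [e]
      have hh : h (n+2) = t (n+2) * h (n+1) + h n := rfl
      simp [Mt, Matrix.mul_apply, Fin.sum_univ_two, hh, ih.1, ih.2]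
      ring

lemma h_eq_Fm (n : ℕ) : h n = Fm n 1 0 := by
  cases n with
  | zero =>
    show h 0 = (1 : Mat) 1 0
    rw [Matrix.one_apply_ne (by decide)]
    rfl
  | succ n => exact ((Fm_entry n).2).symm

end Stmt15Aux

open Stmt15Aux in
theorem stmt15 : ∀ m : ℕ, 2 ≤ m → {n : ℕ | 0 < n ∧ (m : ℤ) ∣ h n}.Infinite := by
  intro m hm
  haveI : NeZero m := ⟨by omega⟩
  set φ : Mat →+* Matrix (Fin 2) (Fin 2) (ZMod m) :=
    (Int.castRingHom (ZMod m)).mapMatrix with hφdef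
  have map_smul' : ∀ (z : ℤ) (M : Mat), φ (z • M) = (z : ZMod m) • φ M := by
    intro z M
    ext i j
    simp only [hφdef, RingHom.mapMatrix_apply, Matrix.map_apply, Matrix.smul_apply,
      smul_eq_mul]
    exact map_mul (Int.castRingHom (ZMod m)) z (M i j)
  let f : ℕ → Matrix (Fin 2) (Fin 2) (ZMod m) := fun j => φ (Fm (2 ^ (j+1)))
  obtain ⟨X, hX⟩ := Finite.exists_infinite_fiber f
  have hS : (f ⁻¹' {X}).Infinite := Set.infinite_coe_iff.mp hX
  set W : Matrix (Fin 2) (Fin 2) (ZMod m) := φ Dm * X with hWdef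
  have hD2 : φ Dm * φ Dm = 1 := by
    rw [← map_mul, Dm_mul_Dm, map_one]
  -- determinant of X
  obtain ⟨j₀, hj₀mem, _⟩ := hS.exists_gt 0
  have hXval : f j₀ = X := by
    have := Set.mem_preimage.mp hj₀mem
    simpa using this
  have hdetDm : (φ Dm).det = -1 := by
    rw [← RingHom.map_det]
    have : Dm.det = -1 := by
      unfold Dm; rw [Matrix.det_fin_two_of]; norm_num
    rw [this]
    simp
  have hdetX : X.det = 1 := by
    rw [← hXval]
    show (φ (Fm (2 ^ (j₀+1)))).det = 1
    rw [← RingHom.map_det, det_Fm]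
    have hev : Even (2 ^ (j₀+1)) := ⟨2 ^ j₀, by ring⟩
    rw [hev.neg_one_pow]
    simp
  have hWu : IsUnit W := by
    apply (Matrix.isUnit_iff_isUnit_det W).mpr
    rw [hWdef, Matrix.det_mul, hdetDm, hdetX, mul_one]
    exact isUnit_one.neg
  set u := hWu.unit with hudef
  have hu : (u : Matrix (Fin 2) (Fin 2) (ZMod m)) = W := hWu.unit_spec
  set o := orderOf u with hodef
  have ho : 0 < o := orderOf_pos u
  have hWpow : W ^ (o * 2) = 1 := by
    rw [← hu, ← Units.val_pow_eq_pow_val, pow_mul, pow_orderOf_eq_one, one_pow,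
      Units.val_one]
  have hDpow : (φ Dm) ^ (o * 2) = 1 := by
    rw [mul_comm, pow_mul]
    have : (φ Dm) ^ 2 = 1 := by rw [sq, hD2]
    rw [this, one_pow]
  -- key construction
  have key : ∀ c B : ℕ, ∃ n : ℕ, 2 ^ B ≤ n ∧
      ∃ s : ℕ, φ (Fm n) = ((-1 : ZMod m) ^ s) • ((φ Dm) ^ (c+1) * W ^ (c+1)) := by
    intro c
    induction c with
    | zero =>
      intro B
      obtain ⟨j, hjmem, hjB⟩ := hS.exists_gt B
      have hfj : f j = X := by simpa using Set.mem_preimage.mp hjmem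
      refine ⟨2 ^ (j+1), Nat.pow_le_pow_right (by norm_num) (by omega), 0, ?_⟩
      rw [pow_zero, one_smul, pow_one, pow_one, hWdef, ← mul_assoc, hD2, one_mul]
      exact hfj
    | succ c ih =>
      intro B
      obtain ⟨n, hnB, s, hFn⟩ := ih B
      obtain ⟨j, hjmem, hjn⟩ := hS.exists_gt n
      have hfj : f j = X := by simpa using Set.mem_preimage.mp hjmem
      have hlt : n < 2 ^ (j+1) :=
        lt_of_lt_of_le (Nat.lt_two_pow_self (n := n)) (Nat.pow_le_pow_right (by norm_num) (by omega))
      have hwin := window (j+1) (by omega) n hlt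
      refine ⟨2 ^ (j+1) + n, le_trans hnB (Nat.le_add_left _ _), n + s, ?_⟩
      have hcast : (((-1 : ℤ) ^ n : ℤ) : ZMod m) = (-1 : ZMod m) ^ n := by
        push_cast; ring
      have hmap : φ (Fm (2 ^ (j+1) + n)) =
          ((-1 : ZMod m) ^ n) • (φ Dm * φ (Fm n) * φ Dm * φ (Fm (2 ^ (j+1)))) := by
        rw [hwin, map_smul', hcast, map_mul, map_mul, map_mul]
      have hfj' : φ (Fm (2 ^ (j+1))) = X := hfj
      rw [hmap, hfj', hFn]
      rw [mul_smul_comm, Matrix.smul_mul, Matrix.smul_mul, smul_smul, ← pow_add]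
      congr 1
      have e1 : (φ Dm) ^ (c+1+1) = φ Dm * (φ Dm) ^ (c+1) := by rw [pow_succ']
      have e2 : W ^ (c+1+1) = W ^ (c+1) * W := by rw [pow_succ]
      rw [e1, e2, hWdef]
      simp only [mul_assoc]
  -- conclude
  apply Set.infinite_of_forall_exists_gt
  intro a
  obtain ⟨n, hnB, s, hFn⟩ := key (o * 2 - 1) (a + 1)
  have hco : (o * 2 - 1) + 1 = o * 2 := by omega
  rw [hco, hDpow, hWpow, one_mul] at hFn
  have hone : φ (Fm n) 1 0 = 0 := by
    rw [hFn]
    rw [Matrix.smul_apply, Matrix.one_apply_ne (by decide : (1 : Fin 2) ≠ 0)]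
    simp
  have hentry : φ (Fm n) 1 0 = ((h n : ℤ) : ZMod m) := by
    rw [h_eq_Fm n]
    simp [hφdef, RingHom.mapMatrix_apply, Matrix.map_apply]
  have hdvd : (m : ℤ) ∣ h n := by
    rw [hentry] at hone
    exact (ZMod.intCast_zmod_eq_zero_iff_dvd _ m).mp hone
  have hbig : a < n := by
    have h1 : a < 2 ^ (a+1) :=
      lt_of_lt_of_le (Nat.lt_two_pow_self (n := a)) (Nat.pow_le_pow_right (by norm_num) (by omega))
    exact lt_of_lt_of_le h1 hnB
  exact ⟨n, ⟨by omega, hdvd⟩, hbig⟩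
end

section
/- For every k ∈ ℕ, h_{2^{2k+2}-3} = h_{2^{2k+1}-2}² + h_{2^{2k+1}-1}², and moreover h_{2^{2k+1}-1}² + h_{2^{2k+1}+1}² = h_{2^{2k+1}-2}² + h_{2^{2k+1}-1}². In particular, h_{2^{2k+2}-3} is a sum of two squares. -/
namespace Aux19

lemma t_zero : t 0 = 1 := by norm_num [t]
lemma t_one : t 1 = -1 := by norm_num [t]

lemma t_even (n : ℕ) : t (2 * n) = t n := by
  rcases Nat.eq_zero_or_pos n with rfl | hn
  · rfl
  · have : (0:ℕ) < 2 * n := by omega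
    rw [t, Nat.digits_def' (by norm_num) this]
    simp [Nat.mul_div_cancel_left, Nat.mul_mod_right, t]

lemma t_odd (n : ℕ) : t (2 * n + 1) = - t n := by
  rw [t, Nat.digits_def' (by norm_num) (by omega)]
  have h1 : (2 * n + 1) % 2 = 1 := by omega
  have h2 : (2 * n + 1) / 2 = n := by omega
  rw [h1, h2]
  simp [t, pow_succ, pow_add, mul_comm]

lemma t_shift : ∀ m : ℕ, ∀ j < 2 ^ m, t (2 ^ m + j) = - t j := by
  intro m
  induction m with
  | zero => intro j hj; interval_cases j; simp [t_one, t_zero]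
  | succ m ih =>
    intro j hj
    rcases Nat.even_or_odd j with ⟨q, hq⟩ | ⟨q, hq⟩
    · have e : 2 ^ (m+1) + j = 2 * (2 ^ m + q) := by subst hq; ring
      have e2 : j = 2 * q := by omega
      rw [e, t_even, ih q (by omega), e2, t_even]
    · have e : 2 ^ (m+1) + j = 2 * (2 ^ m + q) + 1 := by subst hq; ring
      have e2 : j = 2 * q + 1 := by omega
      rw [e, t_odd, ih q (by omega), e2, t_odd, neg_neg]

lemma t_pow_sub_one : ∀ l : ℕ, t (2 ^ l - 1) = (-1) ^ l := by
  intro l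
  induction l with
  | zero => simp [t_zero]
  | succ l ih =>
    have e : 2 ^ (l+1) - 1 = 2 * (2 ^ l - 1) + 1 := by
      have := Nat.one_le_two_pow (n := l); omega
    rw [e, t_odd, ih, pow_succ]
    ring

def M (n : ℕ) : Matrix (Fin 2) (Fin 2) ℤ := !![t n, 1; 1, 0]
def D : Matrix (Fin 2) (Fin 2) ℤ := !![1, 0; 0, -1]
def E : Matrix (Fin 2) (Fin 2) ℤ := !![0, 1; 1, -1]
def F (a n : ℕ) : Matrix (Fin 2) (Fin 2) ℤ :=
  ((List.range n).map (fun j => M (a + j))).prod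

lemma DD : D * D = 1 := by
  rw [D, Matrix.mul_fin_two, Matrix.one_fin_two]; norm_num

lemma F_zero (a : ℕ) : F a 0 = 1 := rfl

lemma F_succ (a n : ℕ) : F a (n + 1) = F a n * M (a + n) := by
  simp [F, List.range_succ]

lemma F_append (a m n : ℕ) : F a (m + n) = F a m * F (a + m) n := by
  simp [F, List.range_add, List.map_map, Function.comp_def, add_assoc,
    List.prod_append]

lemma prod_neg_conj (l : List (Matrix (Fin 2) (Fin 2) ℤ)) :
    (l.map (fun A => -(D * A * D))).prod =
      ((-1 : ℤ) ^ l.length) • (D * l.prod * D) := by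
  induction l with
  | nil => simp [DD]
  | cons A l ih =>
    simp only [List.map_cons, List.prod_cons, ih, List.length_cons]
    rw [mul_smul_comm, pow_succ]
    have : -(D * A * D) * (D * l.prod * D) = -(D * (A * l.prod) * D) := by
      rw [neg_mul]
      congr 1
      calc D * A * D * (D * l.prod * D) = D * A * (D * D) * l.prod * D := by
            noncomm_ring
        _ = D * (A * l.prod) * D := by rw [DD]; noncomm_ring
    rw [this, mul_smul]
    simp

lemma F_twist (m : ℕ) (hm : 1 ≤ m) :
    F (2 ^ m) (2 ^ m) = D * F 0 (2 ^ m) * D := by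
  have hmap : (List.range (2 ^ m)).map (fun j => M (2 ^ m + j)) =
      (List.range (2 ^ m)).map (fun j => -(D * M (0 + j) * D)) := by
    apply List.map_congr_left
    intro j hj
    have hj' : j < 2 ^ m := List.mem_range.mp hj
    have ht := t_shift m j hj'
    rw [M, M, D, Nat.zero_add, Matrix.mul_fin_two, Matrix.mul_fin_two]
    rw [ht]
    ext i k
    fin_cases i <;> fin_cases k <;> simp
  have heven : Even (2 ^ m) := (Nat.even_pow).mpr ⟨even_two, by omega⟩
  calc F (2 ^ m) (2 ^ m)
      = ((List.range (2 ^ m)).map (fun j => -(D * M (0 + j) * D))).prod := by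
        rw [F, hmap]
    _ = (((List.range (2 ^ m)).map (fun j => M (0 + j))).map
          (fun A => -(D * A * D))).prod := by rw [List.map_map]; rfl
    _ = ((-1 : ℤ) ^ ((List.range (2 ^ m)).map (fun j => M (0 + j))).length) •
          (D * F 0 (2 ^ m) * D) := by rw [prod_neg_conj]; rfl
    _ = D * F 0 (2 ^ m) * D := by
        simp [heven.neg_one_pow]

lemma F02 : F 0 2 = !![0, 1; -1, 1] := by
  have h1 : F 0 2 = F 0 1 * M (0 + 1) := F_succ 0 1
  have h0 : F 0 1 = F 0 0 * M (0 + 0) := F_succ 0 0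
  rw [h1, h0, F_zero, one_mul, M, M]
  norm_num [t_zero, t_one, Matrix.mul_fin_two]

lemma F_rec (m : ℕ) (hm : 1 ≤ m) :
    F 2 (2 ^ (m + 1) - 2) = F 2 (2 ^ m - 2) * E * F 2 (2 ^ m - 2) * D := by
  have h2 : 2 ≤ 2 ^ m := by
    calc 2 = 2 ^ 1 := rfl
    _ ≤ 2 ^ m := Nat.pow_le_pow_right (by norm_num) hm
  have e1 : 2 ^ (m + 1) = 2 ^ m + 2 ^ m := by ring
  have e2 : 2 ^ m = 2 + (2 ^ m - 2) := by omega
  have key : F 0 (2 ^ (m+1)) = F 0 (2 ^ m) * (D * F 0 (2 ^ m) * D) := by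
    rw [e1, F_append, Nat.zero_add, F_twist m hm]
  have e3 : 2 ^ (m+1) = 2 + (2 ^ (m+1) - 2) := by omega
  have g1 : F 0 (2 ^ m) = F 0 2 * F 2 (2 ^ m - 2) := by
    conv_lhs => rw [e2]
    rw [F_append]
  have g2 : F 0 (2 ^ (m+1)) = F 0 2 * F 2 (2 ^ (m+1) - 2) := by
    conv_lhs => rw [e3]
    rw [F_append]
  rw [g2, g1] at key
  -- key : F 0 2 * F 2 (2^(m+1)-2) = F 0 2 * F 2 (2^m-2) * (D * (F 0 2 * F 2 (2^m-2)) * D)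
  have hB : (!![1, -1; 1, 0] : Matrix (Fin 2) (Fin 2) ℤ) * F 0 2 = 1 := by
    rw [F02, Matrix.mul_fin_two, Matrix.one_fin_two]; norm_num
  have hDE : D * F 0 2 = E := by
    rw [F02, D, E, Matrix.mul_fin_two]; norm_num
  have := congrArg (fun X => (!![1, -1; 1, 0] : Matrix (Fin 2) (Fin 2) ℤ) * X) key
  simp only [← mul_assoc, hB, one_mul] at this
  rw [this, ← hDE]
  noncomm_ring

lemma F_entries : ∀ n : ℕ, (F 2 n) 0 0 = h (n + 1) ∧ (F 2 n) 0 1 = h n := by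
  intro n
  induction n with
  | zero => constructor <;> simp [F_zero, Matrix.one_apply, h]
  | succ n ih =>
    obtain ⟨ih0, ih1⟩ := ih
    rw [F_succ]
    have hM : (2 : ℕ) + n = n + 2 := by omega
    constructor
    · rw [Matrix.mul_apply, Fin.sum_univ_two, ih0, ih1, hM, M]
      simp
      rw [show n + 1 + 1 = n + 2 from rfl, h]
      ring
    · rw [Matrix.mul_apply, Fin.sum_univ_two, ih0, ih1, hM, M]
      simp

lemma key : ∀ m : ℕ, 1 ≤ m → ∃ a b c d : ℤ,
    F 2 (2 ^ m - 2) = !![a, b; c, d] ∧ c + (-1) ^ (m + 1) * d = a := by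
  intro m
  induction m with
  | zero => omega
  | succ m ih =>
    intro _
    rcases Nat.eq_zero_or_pos m with rfl | hm
    · refine ⟨1, 0, 0, 1, ?_, by norm_num⟩
      rw [show 2 ^ 1 - 2 = 0 from rfl, F_zero, Matrix.one_fin_two]
    · obtain ⟨a, b, c, d, hF, hinv⟩ := ih hm
      rw [F_rec m hm, hF]
      rw [E, D, Matrix.mul_fin_two, Matrix.mul_fin_two, Matrix.mul_fin_two]
      refine ⟨_, _, _, _, rfl, ?_⟩
      rcases Nat.even_or_odd (m + 1) with he | ho
      · rw [he.neg_one_pow] at hinv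
        have hs : ((-1 : ℤ)) ^ (m + 1 + 1) = -1 := by
          rw [pow_succ, he.neg_one_pow]; norm_num
        rw [hs]
        linear_combination (b + c - d) * hinv
      · rw [ho.neg_one_pow] at hinv
        have hs : ((-1 : ℤ)) ^ (m + 1 + 1) = 1 := by
          rw [pow_succ, ho.neg_one_pow]; norm_num
        rw [hs]
        linear_combination (b + c - d) * hinv

end Aux19

theorem stmt19 : ∀ k : ℕ,
    h (2 ^ (2 * k + 1) - 1) ^ 2 + h (2 ^ (2 * k + 1) + 1) ^ 2 =
      h (2 ^ (2 * k + 1) - 2) ^ 2 + h (2 ^ (2 * k + 1) - 1) ^ 2 ∧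
    h (2 ^ (2 * k + 2) - 3) =
      h (2 ^ (2 * k + 1) - 2) ^ 2 + h (2 ^ (2 * k + 1) - 1) ^ 2 ∧
    ∃ a b : ℤ, h (2 ^ (2 * k + 2) - 3) = a ^ 2 + b ^ 2 := by
  intro k
  obtain ⟨a, b, c, d, hF, hinv⟩ := Aux19.key (2 * k + 1) (by omega)
  have he : Even (2 * k + 1 + 1) := ⟨k + 1, by omega⟩
  rw [he.neg_one_pow, one_mul] at hinv
  have h2 : 2 ≤ 2 ^ (2 * k + 1) := by
    calc 2 = 2 ^ 1 := rfl
    _ ≤ 2 ^ (2 * k + 1) := Nat.pow_le_pow_right (by norm_num) (by omega)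
  have hp : 2 ^ (2 * k + 1 + 1) = 2 * 2 ^ (2 * k + 1) := by ring
  set n := 2 ^ (2 * k + 1) - 2 with hn
  have hn2 : 2 ^ (2 * k + 1) = n + 2 := by omega
  have ha : h (n + 1) = a := by
    have := (Aux19.F_entries n).1
    rw [hF] at this
    simpa using this.symm
  have hb : h n = b := by
    have := (Aux19.F_entries n).2
    rw [hF] at this
    simpa using this.symm
  -- entries of the doubled matrix
  have idx : 2 ^ (2 * k + 1 + 1) - 2 = 2 * n + 2 := by omega
  have hA := (Aux19.F_entries (2 * n + 2)).1
  have hB := (Aux19.F_entries (2 * n + 2)).2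
  have hR := Aux19.F_rec (2 * k + 1) (by omega)
  rw [idx, hF] at hR
  rw [hR, Aux19.E, Aux19.D, Matrix.mul_fin_two, Matrix.mul_fin_two,
    Matrix.mul_fin_two] at hA hB
  simp only [Matrix.cons_val', Matrix.cons_val_zero, Matrix.cons_val_one,
    Matrix.head_cons, Matrix.empty_val', Matrix.cons_val_fin_one,
    Matrix.head_fin_const, Matrix.of_apply, Matrix.cons_val_zero] at hA hB ⊢
  rw [show 2 * n + 2 + 1 = 2 * n + 3 by omega] at hA
  -- h recurrences near 2^(2k+1)
  have ht0 : t (n + 2) = -1 := by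
    have := Aux19.t_shift (2 * k + 1) 0 (by omega)
    rw [Nat.add_zero] at this
    rw [← hn2] at *
    rw [this, Aux19.t_zero]
  have ht1 : t (n + 3) = 1 := by
    have := Aux19.t_shift (2 * k + 1) 1 (by omega)
    rw [show 2 ^ (2 * k + 1) + 1 = n + 3 by omega] at this
    rw [this, Aux19.t_one, neg_neg]
  have hh1 : h (n + 2) = t (n + 2) * h (n + 1) + h n := by rw [h]
  have hh2 : h (n + 3) = t (n + 3) * h (n + 2) + h (n + 1) := by
    rw [show n + 3 = n + 1 + 2 by omega, h]
  have hskip : h (n + 3) = h n := by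
    rw [hh2, ht1, hh1, ht0]; ring
  have ht3 : t (2 * n + 3) = 1 := by
    have := Aux19.t_pow_sub_one (2 * k + 1 + 1)
    rw [show 2 ^ (2 * k + 1 + 1) - 1 = 2 * n + 3 by omega, he.neg_one_pow] at this
    exact this
  have hh3 : h (2 * n + 3) = t (2 * n + 3) * h (2 * n + 2) + h (2 * n + 1) := by
    rw [show 2 * n + 3 = 2 * n + 1 + 2 by omega, h]
  rw [ht3, one_mul] at hh3
  have hval : h (2 * n + 1) = a ^ 2 + b ^ 2 := by
    linear_combination hB - hA - hh3 + (a - b) * hinv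
  have i1 : 2 ^ (2 * k + 1) - 1 = n + 1 := by omega
  have i3 : 2 ^ (2 * k + 1) + 1 = n + 3 := by omega
  have i4 : 2 ^ (2 * k + 2) - 3 = 2 * n + 1 := by
    have : 2 ^ (2 * k + 2) = 2 * 2 ^ (2 * k + 1) := by ring
    omega
  rw [i1, i3, i4, hskip]
  refine ⟨by ring, ?_, ⟨h n, h (n + 1), ?_⟩⟩ <;>
    rw [hval, ha, hb] <;> ring
end
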